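/- Li₃(1/2) = (7/8)·ζ(3) − (π²/12)·log 2 + (1/6)·(log 2)³, where Li₃(w) = ∑_{n≥1} wⁿ/n³. -/

import Mathlib

open Real Filter Set Topology

noncomputable def Li (s : ℕ) (w : ℝ) : ℝ := ∑' n : ℕ, w ^ (n + 1) / ((n:ℝ) + 1) ^ s
noncomputable def P (s : ℕ) (x : ℝ) : ℝ := ∑' n : ℕ, x ^ n / ((n:ℝ) + 1) ^ s

lemma hsum_s {s : ℕ} (hs : 2 ≤ s) : Summable (fun n : ℕ => 1 / ((n:ℝ) + 1) ^ s) := by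
  have h := (summable_nat_add_iff 1).mpr ((summable_one_div_nat_pow (p := s)).mpr hs)
  refine h.congr fun n => by push_cast; ring

lemma summable_Li {s : ℕ} (hs : 2 ≤ s) {x : ℝ} (hx : |x| ≤ 1) :
    Summable (fun n : ℕ => x ^ (n + 1) / ((n:ℝ) + 1) ^ s) := by
  refine Summable.of_norm_bounded (hsum_s hs) fun n => ?_
  have h1 : (0:ℝ) < ((n:ℝ)+1)^s := by positivity
  rw [norm_div, norm_pow, Real.norm_eq_abs, Real.norm_eq_abs, abs_of_pos h1]
  gcongr
  exact pow_le_one₀ (abs_nonneg x) hx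

lemma Li_eq_mul (s : ℕ) (x : ℝ) : Li s x = x * P s x := by
  rw [Li, P, ← tsum_mul_left]
  congr 1; funext n; rw [pow_succ']; ring

lemma Li_zero (s : ℕ) : Li s 0 = 0 := by
  simp [Li]

lemma continuousOn_Li {s : ℕ} (hs : 2 ≤ s) :
    ContinuousOn (Li s) (Icc (-1:ℝ) 1) := by
  refine continuousOn_tsum (fun n => (continuousOn_pow _).div_const _) (hsum_s hs)
    fun n x hx => ?_
  have h1 : (0:ℝ) < ((n:ℝ)+1)^s := by positivity
  rw [norm_div, norm_pow, Real.norm_eq_abs, Real.norm_eq_abs, abs_of_pos h1]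
  gcongr
  exact pow_le_one₀ (abs_nonneg x) (abs_le.mpr ⟨hx.1, hx.2⟩)

lemma hasDerivAt_Li (s : ℕ) {x : ℝ} (hx : |x| < 1) :
    HasDerivAt (Li (s + 1)) (P s x) x := by
  set r : ℝ := (|x| + 1) / 2 with hr
  have hr0 : 0 ≤ r := by positivity
  have hr1 : r < 1 := by rw [hr]; linarith
  have hxr : |x| < r := by rw [hr]; linarith
  refine hasDerivAt_tsum_of_isPreconnected (u := fun n : ℕ => r ^ n)
    (summable_geometric_of_lt_one hr0 hr1) (Metric.isOpen_ball)
    (convex_ball (0:ℝ) r).isPreconnected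
    (g := fun n z => z ^ (n + 1) / ((n:ℝ) + 1) ^ (s+1))
    (g' := fun n z => z ^ n / ((n:ℝ) + 1) ^ s)
    (fun n y _ => ?_) (fun n y hy => ?_) (y₀ := 0)
    (Metric.mem_ball_self (lt_of_le_of_lt (abs_nonneg x) hxr)) ?_ ?_
  · have h := (hasDerivAt_pow (n+1) y).div_const (((n:ℝ) + 1) ^ (s+1))
    refine h.congr_deriv (Eq.symm ?_)
    have hne : ((n:ℝ) + 1) ≠ 0 := by positivity
    push_cast
    rw [pow_succ]
    field_simp
  · have hyr : |y| ≤ r := by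
      rw [Metric.mem_ball, Real.dist_eq, sub_zero] at hy
      exact hy.le
    have h1 : (1:ℝ) ≤ ((n:ℝ)+1)^s := one_le_pow₀ (by linarith [Nat.cast_nonneg (α := ℝ) n])
    calc ‖y ^ n / ((n:ℝ) + 1) ^ s‖ = |y|^n / ((n:ℝ)+1)^s := by
          have hp : (0:ℝ) < ((n:ℝ)+1)^s := by positivity
          rw [Real.norm_eq_abs, abs_div, abs_pow, abs_of_pos hp]
      _ ≤ r ^ n / 1 := by gcongr
      _ = r ^ n := by ring
  · exact (summable_zero).congr (by simp)
  · rw [Metric.mem_ball, Real.dist_eq, sub_zero]; exact hxr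

lemma Li_one_eq {x : ℝ} (hx : |x| < 1) : Li 1 x = -Real.log (1 - x) := by
  rw [Li]
  have h := hasSum_pow_div_log_of_abs_lt_one hx
  rw [← h.tsum_eq]
  congr 1; funext n; norm_num

lemma P_one_eq {x : ℝ} (hx : |x| < 1) (hx0 : x ≠ 0) : P 1 x = -Real.log (1 - x) / x := by
  have h : Li 1 x = x * P 1 x := by
    rw [Li, P, ← tsum_mul_left]
    congr 1; funext n; rw [pow_succ']; ring
  rw [Li_one_eq hx] at h
  field_simp at h ⊢
  linarith [h]

lemma P_eq_Li_div {s : ℕ} {x : ℝ} (hx0 : x ≠ 0) : P s x = Li s x / x := by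
  have h : Li s x = x * P s x := by
    rw [Li, P, ← tsum_mul_left]
    congr 1; funext n; rw [pow_succ']; ring
  rw [h]; field_simp

/-- constancy on an open interval from zero derivative -/
lemma const_of_deriv_zero {f : ℝ → ℝ} {a b : ℝ}
    (h : ∀ x ∈ Ioo a b, HasDerivAt f 0 x) :
    ∀ x ∈ Ioo a b, ∀ y ∈ Ioo a b, f x = f y := by
  have key : ∀ x ∈ Ioo a b, ∀ y ∈ Ioo a b, x < y → f x = f y := by
    intro x hx y hy hxy
    have hsub : Icc x y ⊆ Ioo a b := fun z hz => ⟨lt_of_lt_of_le hx.1 hz.1, lt_of_le_of_lt hz.2 hy.2⟩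
    have hcont : ContinuousOn f (Icc x y) := fun z hz =>
      ((h z (hsub hz)).continuousAt).continuousWithinAt
    have hderiv : ∀ z ∈ Ioo x y, HasDerivAt f 0 z := fun z hz =>
      h z (hsub ⟨hz.1.le, hz.2.le⟩)
    obtain ⟨c, hc, hc0⟩ := exists_hasDerivAt_eq_slope f (fun _ => 0) hxy hcont hderiv
    have hyx : y - x ≠ 0 := by linarith
    have : f y - f x = 0 := by
      have := hc0.symm
      rw [div_eq_iff hyx] at this
      linarith
    linarith
  intro x hx y hy
  rcases lt_trichotomy x y with h | h | h
  · exact key x hx y hy h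
  · rw [h]
  · exact (key y hy x hx h).symm

lemma const_eq_rlimit {f : ℝ → ℝ} {a b c L : ℝ} (hab : a < b)
    (hconst : ∀ x ∈ Ioo a b, f x = c) (hlim : Tendsto f (𝓝[>] a) (𝓝 L)) : c = L := by
  have hev : f =ᶠ[𝓝[>] a] fun _ => c := by
    filter_upwards [Ioo_mem_nhdsGT_of_mem (by exact ⟨le_rfl, hab⟩ : a ∈ Ico a b)] with x hx
    exact hconst x hx
  have : Tendsto (fun _ : ℝ => c) (𝓝[>] a) (𝓝 L) := hlim.congr' hev
  exact tendsto_nhds_unique tendsto_const_nhds this |>.symm ▸ rfl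

lemma const_eq_llimit {f : ℝ → ℝ} {a b c L : ℝ} (hab : a < b)
    (hconst : ∀ x ∈ Ioo a b, f x = c) (hlim : Tendsto f (𝓝[<] b) (𝓝 L)) : c = L := by
  have hev : f =ᶠ[𝓝[<] b] fun _ => c := by
    filter_upwards [Ioo_mem_nhdsLT_of_mem (by exact ⟨hab, le_rfl⟩ : b ∈ Ioc a b)] with x hx
    exact hconst x hx
  exact (tendsto_nhds_unique tendsto_const_nhds (hlim.congr' hev)).symm ▸ rfl

lemma tendsto_Li_comp {s : ℕ} (hs : 2 ≤ s) {w : ℝ} (hw : w ∈ Icc (-1:ℝ) 1)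
    {l : Filter ℝ} {φ : ℝ → ℝ} (hφ : Tendsto φ l (𝓝 w))
    (hmem : ∀ᶠ x in l, φ x ∈ Icc (-1:ℝ) 1) :
    Tendsto (fun x => Li s (φ x)) l (𝓝 (Li s w)) := by
  have h := (continuousOn_Li hs) w hw
  exact h.tendsto.comp (tendsto_nhdsWithin_iff.mpr ⟨hφ, hmem⟩)

/-- `log t * log (1 - t) → 0` as `t → 0⁺`. -/
lemma tendsto_log_mul_log_one_sub : Tendsto (fun t : ℝ => Real.log t * Real.log (1 - t))
    (𝓝[>] (0:ℝ)) (𝓝 0) := by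
  have h1 : Tendsto (fun t : ℝ => Real.log t * t) (𝓝[>] (0:ℝ)) (𝓝 0) := by
    have := tendsto_log_mul_rpow_nhdsGT_zero (r := 1) one_pos
    simpa [Real.rpow_one] using this
  have h2 : Tendsto (fun t : ℝ => 2 * |Real.log t * t|) (𝓝[>] (0:ℝ)) (𝓝 0) := by
    have := (h1.abs).const_mul 2
    simpa using this
  apply squeeze_zero_norm' _ h2
  filter_upwards [Ioo_mem_nhdsGT_of_mem (by norm_num : (0:ℝ) ∈ Ico (0:ℝ) (1/2))] with t ht
  obtain ⟨ht0, ht2⟩ := ht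
  have h1t : (0:ℝ) < 1 - t := by linarith
  have hlt : Real.log t ≤ 0 := Real.log_nonpos ht0.le (by linarith)
  have hl1t : Real.log (1 - t) ≤ 0 := Real.log_nonpos h1t.le (by linarith)
  have hbound : -Real.log (1 - t) ≤ 2 * t := by
    have h := Real.log_le_sub_one_of_pos (x := (1 - t)⁻¹) (by positivity)
    rw [Real.log_inv] at h
    have : (1 - t)⁻¹ - 1 = t / (1 - t) := by field_simp; ring
    rw [this] at h
    have : t / (1 - t) ≤ 2 * t := by
      rw [div_le_iff₀ h1t]
      nlinarith
    linarith
  have : ‖Real.log t * Real.log (1 - t)‖ = (-Real.log t) * (-Real.log (1 - t)) := by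
    rw [Real.norm_eq_abs, abs_mul, abs_of_nonpos hlt, abs_of_nonpos hl1t]
  rw [this]
  have habs : |Real.log t * t| = (-Real.log t) * t := by
    rw [abs_mul, abs_of_nonpos hlt, abs_of_pos ht0]
  rw [habs]
  nlinarith [neg_nonneg.mpr hlt, hbound, ht0.le]

lemma hasDerivAt_Li2 {x : ℝ} (hx : |x| < 1) (hx0 : x ≠ 0) :
    HasDerivAt (Li 2) (-Real.log (1 - x) / x) x := by
  have h := hasDerivAt_Li 1 hx
  rwa [P_one_eq hx hx0] at h

lemma hasDerivAt_Li3 {x : ℝ} (hx : |x| < 1) (hx0 : x ≠ 0) :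
    HasDerivAt (Li 3) (Li 2 x / x) x := by
  have h := hasDerivAt_Li 2 hx
  rwa [P_eq_Li_div hx0] at h

lemma hasDerivAt_Li2_one_sub {x : ℝ} (hx : |1 - x| < 1) (hx1 : x ≠ 1) :
    HasDerivAt (fun y => Li 2 (1 - y)) (Real.log x / (1 - x)) x := by
  have hne : (1:ℝ) - x ≠ 0 := sub_ne_zero.mpr (Ne.symm hx1)
  have inner : HasDerivAt (fun y : ℝ => 1 - y) (-1) x := by
    simpa using (hasDerivAt_id x).const_sub 1
  have h := (hasDerivAt_Li2 hx hne).comp x inner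
  refine h.congr_deriv (Eq.symm ?_)
  rw [show (1:ℝ) - (1 - x) = x by ring]
  field_simp

lemma hasDerivAt_log_one_sub {x : ℝ} (hx1 : x ≠ 1) :
    HasDerivAt (fun y => Real.log (1 - y)) (-(1 - x)⁻¹) x := by
  have hne : (1:ℝ) - x ≠ 0 := sub_ne_zero.mpr (Ne.symm hx1)
  have inner : HasDerivAt (fun y : ℝ => 1 - y) (-1) x := by
    simpa using (hasDerivAt_id x).const_sub 1
  have h := (Real.hasDerivAt_log hne).comp x inner
  refine h.congr_deriv (Eq.symm ?_); ring

lemma reflection_deriv {x : ℝ} (hx : x ∈ Ioo (0:ℝ) 1) :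
    HasDerivAt (fun y => Li 2 y + Li 2 (1 - y) + Real.log y * Real.log (1 - y)) 0 x := by
  obtain ⟨hx0, hx1⟩ := hx
  have hax : |x| < 1 := abs_lt.mpr ⟨by linarith, hx1⟩
  have ha1x : |1 - x| < 1 := abs_lt.mpr ⟨by linarith, by linarith⟩
  have hxne : x ≠ 0 := ne_of_gt hx0
  have hx1ne : x ≠ 1 := ne_of_lt hx1
  have h1xne : (1:ℝ) - x ≠ 0 := sub_ne_zero.mpr (Ne.symm hx1ne)
  have d1 := hasDerivAt_Li2 hax hxne
  have d2 := hasDerivAt_Li2_one_sub ha1x hx1ne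
  have d3 := (Real.hasDerivAt_log hxne).mul (hasDerivAt_log_one_sub hx1ne)
  have h := (d1.add d2).add d3
  refine h.congr_deriv (Eq.symm ?_)
  field_simp
  ring



lemma Li_two_one : Li 2 1 = Real.pi ^ 2 / 6 := by
  have h0 : HasSum (fun n : ℕ => (1:ℝ) / ((n:ℝ) + 1) ^ 2) (Real.pi ^ 2 / 6) := by
    have h := (hasSum_nat_add_iff (f := fun n : ℕ => (1:ℝ) / (n:ℝ) ^ 2) 1).mpr
      (by simpa using hasSum_zeta_two)
    refine h.congr_fun fun n => by push_cast; ring_nf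
  rw [Li, ← h0.tsum_eq]
  congr 1; funext n; rw [one_pow]

lemma mem_Ioo_mem_Icc {x : ℝ} (h : x ∈ Ioo (0:ℝ) 1) : x ∈ Icc (-1:ℝ) 1 :=
  ⟨by linarith [h.1], h.2.le⟩

lemma dilog_reflection {x : ℝ} (hx : x ∈ Ioo (0:ℝ) 1) :
    Li 2 x + Li 2 (1 - x) + Real.log x * Real.log (1 - x) = Real.pi ^ 2 / 6 := by
  set H := fun y => Li 2 y + Li 2 (1 - y) + Real.log y * Real.log (1 - y) with hH
  have hconst := const_of_deriv_zero (f := H) (a := 0) (b := 1)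
    (fun y hy => reflection_deriv hy)
  refine const_eq_rlimit (f := H) one_pos (fun y hy => (hconst y hy x hx)) ?_
  have hmem : ∀ᶠ y in 𝓝[>] (0:ℝ), y ∈ Ioo (0:ℝ) 1 :=
    Ioo_mem_nhdsGT_of_mem (by norm_num : (0:ℝ) ∈ Ico (0:ℝ) 1)
  have A : Tendsto (fun y => Li 2 y) (𝓝[>] (0:ℝ)) (𝓝 (Li 2 0)) :=
    tendsto_Li_comp le_rfl (by norm_num) (tendsto_id.mono_left nhdsWithin_le_nhds)
      (hmem.mono fun y hy => mem_Ioo_mem_Icc hy)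
  have B : Tendsto (fun y => Li 2 (1 - y)) (𝓝[>] (0:ℝ)) (𝓝 (Li 2 1)) := by
    refine tendsto_Li_comp le_rfl (by norm_num) ?_ ?_
    · have h01 : Tendsto (fun y : ℝ => 1 - y) (𝓝 (0:ℝ)) (𝓝 1) := by
        have hc : Continuous (fun y : ℝ => 1 - y) := continuous_const.sub continuous_id
        simpa using hc.tendsto (0:ℝ)
      exact h01.mono_left nhdsWithin_le_nhds
    · exact hmem.mono fun y hy => ⟨by linarith [hy.2], by linarith [hy.1]⟩
  have h := (A.add B).add tendsto_log_mul_log_one_sub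
  rw [Li_zero, Li_two_one] at h
  simpa using h

lemma landen_deriv {x : ℝ} (hx : x ∈ Ioo (1/2:ℝ) 1) :
    HasDerivAt (fun y => Li 2 (1 - 1/y) + Li 2 (1 - y) + (1/2) * Real.log y ^ 2) 0 x := by
  obtain ⟨hx0, hx1⟩ := hx
  have hxpos : (0:ℝ) < x := by linarith
  have hxne : x ≠ 0 := ne_of_gt hxpos
  have hx1ne : x ≠ 1 := ne_of_lt hx1
  have ha1x : |1 - x| < 1 := abs_lt.mpr ⟨by linarith, by linarith⟩
  have hu : |1 - 1/x| < 1 := by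
    rw [abs_lt]
    constructor
    · have : 1/x < 2 := by rw [div_lt_iff₀ hxpos]; linarith
      linarith
    · have : 1 < 1/x := by rw [lt_div_iff₀ hxpos]; linarith
      linarith
  have hune : 1 - 1/x ≠ 0 := by
    have : 1 < 1/x := by rw [lt_div_iff₀ hxpos]; linarith
    linarith
  have inner : HasDerivAt (fun y : ℝ => 1 - 1/y) ((x^2)⁻¹) x := by
    have h := (hasDerivAt_inv hxne).const_sub 1
    simpa [one_div] using h
  have d1 := (hasDerivAt_Li2 hu hune).comp x inner
  have d2 := hasDerivAt_Li2_one_sub ha1x hx1ne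
  have d3 := ((Real.hasDerivAt_log hxne).pow 2).const_mul (1/2 : ℝ)
  have h := (d1.add d2).add d3
  refine h.congr_deriv (Eq.symm ?_)
  have e1 : (1:ℝ) - (1 - 1/x) = 1/x := by ring
  rw [e1, one_div, Real.log_inv]
  have h1xne : (1:ℝ) - x ≠ 0 := sub_ne_zero.mpr (Ne.symm hx1ne)
  have hune' : (1:ℝ) - x⁻¹ ≠ 0 := by rwa [one_div] at hune
  push_cast
  field_simp
  have h3 : (x - 1) * x ^ 2 ≠ 0 := mul_ne_zero (sub_ne_zero.mpr hx1ne) (pow_ne_zero 2 hxne)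
  have e4 : Real.log x * x * (1 - x) / ((x - 1) * x ^ 2) = -Real.log x / x := by
    rw [div_eq_div_iff h3 hxne]; ring
  ring

lemma landen {x : ℝ} (hx : x ∈ Ioo (1/2:ℝ) 1) :
    Li 2 (1 - 1/x) = -Li 2 (1 - x) - (1/2) * Real.log x ^ 2 := by
  set K := fun y => Li 2 (1 - 1/y) + Li 2 (1 - y) + (1/2) * Real.log y ^ 2 with hK
  have hconst := const_of_deriv_zero (f := K) (a := 1/2) (b := 1)
    (fun y hy => landen_deriv hy)
  have hmem : ∀ᶠ y in 𝓝[<] (1:ℝ), y ∈ Ioo (1/2:ℝ) 1 :=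
    Ioo_mem_nhdsLT_of_mem (by norm_num : (1:ℝ) ∈ Ioc (1/2:ℝ) 1)
  have hKx : K x = 0 := by
    refine const_eq_llimit (a := 1/2) (b := 1) (by norm_num)
      (fun y hy => (hconst y hy x hx)) ?_
    have A : Tendsto (fun y => Li 2 (1 - 1/y)) (𝓝[<] (1:ℝ)) (𝓝 (Li 2 0)) := by
      refine tendsto_Li_comp le_rfl (by norm_num) ?_ ?_
      · have hc : ContinuousAt (fun y : ℝ => 1 - 1/y) 1 :=
          continuousAt_const.sub (continuousAt_const.div continuousAt_id one_ne_zero)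
        have ht : Tendsto (fun y : ℝ => 1 - 1/y) (𝓝 1) (𝓝 (1 - 1/1)) := hc.tendsto
        rw [show (1:ℝ) - 1/1 = 0 by norm_num] at ht
        exact ht.mono_left nhdsWithin_le_nhds
      · filter_upwards [hmem] with y hy
        obtain ⟨hy0, hy1⟩ := hy
        have hypos : (0:ℝ) < y := by linarith
        constructor
        · have : 1/y < 2 := by rw [div_lt_iff₀ hypos]; linarith
          linarith
        · have : 1 < 1/y := by rw [lt_div_iff₀ hypos]; linarith
          linarith
    have B : Tendsto (fun y => Li 2 (1 - y)) (𝓝[<] (1:ℝ)) (𝓝 (Li 2 0)) := by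
      refine tendsto_Li_comp le_rfl (by norm_num) ?_ ?_
      · have hc : Continuous (fun y : ℝ => 1 - y) := continuous_const.sub continuous_id
        have := hc.tendsto (1:ℝ)
        simp only [sub_self] at this
        exact this.mono_left nhdsWithin_le_nhds
      · filter_upwards [hmem] with y hy
        exact ⟨by linarith [hy.2], by linarith [hy.1]⟩
    have C : Tendsto (fun y : ℝ => (1/2) * Real.log y ^ 2) (𝓝[<] (1:ℝ)) (𝓝 0) := by
      have hc : ContinuousAt (fun y : ℝ => (1/2) * Real.log y ^ 2) 1 :=
        (continuousAt_const.mul ((Real.continuousAt_log one_ne_zero).pow 2))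
      have := hc.tendsto
      simp only [Real.log_one] at this
      norm_num at this
      exact this.mono_left nhdsWithin_le_nhds
    have h := (A.add B).add C
    rw [Li_zero] at h
    simpa [hK] using h
  rw [hK] at hKx
  simp only at hKx
  linarith

lemma trilog_deriv {x : ℝ} (hx : x ∈ Ioo (1/2:ℝ) 1) :
    HasDerivAt (fun y => Li 3 y + Li 3 (1 - y) + Li 3 (1 - 1/y)
      - Real.log y ^ 3 / 6 - (Real.pi ^ 2 / 6) * Real.log y
      + (1/2) * Real.log y ^ 2 * Real.log (1 - y)) 0 x := by
  obtain ⟨hx0, hx1⟩ := hx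
  have hxpos : (0:ℝ) < x := by linarith
  have hxne : x ≠ 0 := ne_of_gt hxpos
  have hx1ne : x ≠ 1 := ne_of_lt hx1
  have h1xne : (1:ℝ) - x ≠ 0 := sub_ne_zero.mpr (Ne.symm hx1ne)
  have hax : |x| < 1 := abs_lt.mpr ⟨by linarith, hx1⟩
  have ha1x : |1 - x| < 1 := abs_lt.mpr ⟨by linarith, by linarith⟩
  have h1x' : 1 < 1/x := by rw [lt_div_iff₀ hxpos]; linarith
  have h2x' : 1/x < 2 := by rw [div_lt_iff₀ hxpos]; linarith
  have hu : |1 - 1/x| < 1 := abs_lt.mpr ⟨by linarith, by linarith⟩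
  have hune : 1 - 1/x ≠ 0 := by linarith
  have innerSub : HasDerivAt (fun y : ℝ => 1 - y) (-1) x := by
    simpa using (hasDerivAt_id x).const_sub 1
  have inner : HasDerivAt (fun y : ℝ => 1 - 1/y) ((x^2)⁻¹) x := by
    have h := (hasDerivAt_inv hxne).const_sub 1
    simpa [one_div] using h
  have d1 := hasDerivAt_Li3 hax hxne
  have d2 := (hasDerivAt_Li3 ha1x h1xne).comp x innerSub
  have d3 := (hasDerivAt_Li3 hu hune).comp x inner
  have d4 := ((Real.hasDerivAt_log hxne).pow 3).div_const 6
  have d5 := (Real.hasDerivAt_log hxne).const_mul (Real.pi ^ 2 / 6)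
  have d6 := (((Real.hasDerivAt_log hxne).pow 2).const_mul (1/2 : ℝ)).mul
    (hasDerivAt_log_one_sub hx1ne)
  have h := ((((d1.add d2).add d3).sub d4).sub d5).add d6
  refine h.congr_deriv (Eq.symm ?_)
  rw [dilog_reflection ⟨hxpos, hx1⟩ |> fun hre => (by linarith [hre] :
    Li 2 x = Real.pi ^ 2 / 6 - Li 2 (1 - x) - Real.log x * Real.log (1 - x)),
    landen ⟨hx0, hx1⟩]
  push_cast
  simp only [Pi.pow_apply]
  set A := Li 2 (1 - x)
  set Lx := Real.log x
  set L1x := Real.log (1 - x)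
  have hu2 : 1 - 1/x = (x - 1)/x := by field_simp
  rw [hu2]
  have hx1' : x - 1 ≠ 0 := sub_ne_zero.mpr hx1ne
  have e5 : (-A - 1 / 2 * Lx ^ 2) / ((x - 1) / x) = (-A - 1 / 2 * Lx ^ 2) * x / (x - 1) := by
    rw [div_div_eq_mul_div]
  rw [e5]
  field_simp
  ring



lemma Li_three_one : Li 3 1 = ∑' n : ℕ, 1 / ((n:ℝ) + 1) ^ 3 := by
  rw [Li]; congr 1; funext n; rw [one_pow]

lemma Li3_neg_one : Li 3 (-1 : ℝ) = -(3/4) * Li 3 1 := by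
  have hs3 : Summable (fun n : ℕ => 1/((n:ℝ)+1)^3) := hsum_s (by norm_num)
  set f : ℕ → ℝ := fun n => 1/((n:ℝ)+1)^3 with hf
  set Z := ∑' n : ℕ, f n with hZdef
  have hZ : HasSum f Z := hs3.hasSum
  have hodd : HasSum (fun k => f (2*k+1)) (1/8 * Z) := by
    have h := hZ.mul_left (1/8 : ℝ)
    refine h.congr_fun fun k => ?_
    have hk : ((k:ℝ)+1) ≠ 0 := by positivity
    simp only [hf]
    push_cast
    field_simp
    ring
  have hevensum : Summable (fun k => f (2*k)) :=
    hs3.comp_injective (fun a b h => by omega)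
  obtain ⟨E, hE⟩ := hevensum
  have htot : HasSum f (E + 1/8 * Z) := hE.even_add_odd hodd
  have hEZ : E + 1/8 * Z = Z := htot.unique hZ
  set g : ℕ → ℝ := fun n => (-1:ℝ)^(n+1)/((n:ℝ)+1)^3 with hg
  have hgeven : HasSum (fun k => g (2*k)) (-E) := by
    refine hE.neg.congr_fun fun k => ?_
    simp only [hg, hf]
    have : (-1:ℝ)^(2*k+1) = -1 := Odd.neg_one_pow ⟨k, by ring⟩
    rw [this]
    push_cast
    ring
  have hgodd : HasSum (fun k => g (2*k+1)) (1/8 * Z) := by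
    refine hodd.congr_fun fun k => ?_
    simp only [hg, hf]
    have : (-1:ℝ)^(2*k+1+1) = 1 := Even.neg_one_pow ⟨k+1, by ring⟩
    rw [this, one_div]
  have hgsum : HasSum g (-E + 1/8 * Z) := hgeven.even_add_odd hgodd
  have : Li 3 (-1 : ℝ) = -E + 1/8 * Z := by
    rw [Li, ← hgsum.tsum_eq]
  rw [this, Li_three_one, ← hZdef]
  have : E = 7/8 * Z := by linarith
  rw [this]; ring

theorem Li3_half :
    Li 3 (1/2)
    = (7/8) * (∑' n : ℕ, 1 / ((n:ℝ) + 1) ^ 3)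
      - (Real.pi ^ 2 / 12) * Real.log 2 + (1/6) * (Real.log 2) ^ 3 := by
  set G : ℝ → ℝ := fun y => Li 3 y + Li 3 (1 - y) + Li 3 (1 - 1/y)
      - Real.log y ^ 3 / 6 - (Real.pi ^ 2 / 6) * Real.log y
      + (1/2) * Real.log y ^ 2 * Real.log (1 - y) with hG
  have hconst := const_of_deriv_zero (f := G) (a := 1/2) (b := 1)
    (fun y hy => trilog_deriv hy)
  set x₀ : ℝ := 3/4 with hx₀
  have hx₀mem : x₀ ∈ Ioo (1/2:ℝ) 1 := by constructor <;> norm_num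
  set c : ℝ := G x₀ with hc
  have hconst' : ∀ y ∈ Ioo (1/2:ℝ) 1, G y = c := fun y hy => hconst y hy x₀ hx₀mem
  set Z : ℝ := ∑' n : ℕ, 1 / ((n:ℝ) + 1) ^ 3 with hZ
  -- membership facts
  have hmemIoo : ∀ y ∈ Ioo (1/2:ℝ) 1, (1 - 1/y) ∈ Ioo (-1:ℝ) 0 := by
    intro y hy
    obtain ⟨hy0, hy1⟩ := hy
    have hypos : (0:ℝ) < y := by linarith
    constructor
    · have : 1/y < 2 := by rw [div_lt_iff₀ hypos]; linarith
      linarith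
    · have : 1 < 1/y := by rw [lt_div_iff₀ hypos]; linarith
      linarith
  -- limit at 1⁻ : c = Z
  have hcZ : c = Z := by
    have hmem : ∀ᶠ y in 𝓝[<] (1:ℝ), y ∈ Ioo (1/2:ℝ) 1 :=
      Ioo_mem_nhdsLT_of_mem (by norm_num : (1:ℝ) ∈ Ioc (1/2:ℝ) 1)
    refine const_eq_llimit (a := 1/2) (b := 1) (by norm_num) hconst' ?_
    have T1 : Tendsto (fun y => Li 3 y) (𝓝[<] (1:ℝ)) (𝓝 (Li 3 1)) :=
      tendsto_Li_comp (by norm_num) (by norm_num)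
        (tendsto_id.mono_left nhdsWithin_le_nhds)
        (hmem.mono fun y hy => ⟨by linarith [hy.1], hy.2.le⟩)
    have T2 : Tendsto (fun y => Li 3 (1 - y)) (𝓝[<] (1:ℝ)) (𝓝 (Li 3 0)) := by
      refine tendsto_Li_comp (by norm_num) (by norm_num) ?_ ?_
      · have hcont : Continuous (fun y : ℝ => 1 - y) := continuous_const.sub continuous_id
        have := hcont.tendsto (1:ℝ)
        simp only [sub_self] at this
        exact this.mono_left nhdsWithin_le_nhds
      · exact hmem.mono fun y hy => ⟨by linarith [hy.2], by linarith [hy.1]⟩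
    have T3 : Tendsto (fun y => Li 3 (1 - 1/y)) (𝓝[<] (1:ℝ)) (𝓝 (Li 3 0)) := by
      refine tendsto_Li_comp (by norm_num) (by norm_num) ?_ ?_
      · have hcont : ContinuousAt (fun y : ℝ => 1 - 1/y) 1 :=
          continuousAt_const.sub (continuousAt_const.div continuousAt_id one_ne_zero)
        have ht : Tendsto (fun y : ℝ => 1 - 1/y) (𝓝 1) (𝓝 (1 - 1/1)) := hcont.tendsto
        rw [show (1:ℝ) - 1/1 = 0 by norm_num] at ht
        exact ht.mono_left nhdsWithin_le_nhds
      · exact hmem.mono fun y hy => ⟨(hmemIoo y hy).1.le, (hmemIoo y hy).2.le.trans (by norm_num)⟩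
    have Tlog : Tendsto (fun y : ℝ => Real.log y) (𝓝[<] (1:ℝ)) (𝓝 0) := by
      have := (Real.continuousAt_log one_ne_zero).tendsto
      rw [Real.log_one] at this
      exact this.mono_left nhdsWithin_le_nhds
    have T4 : Tendsto (fun y : ℝ => Real.log y ^ 3 / 6) (𝓝[<] (1:ℝ)) (𝓝 0) := by
      have := (Tlog.pow 3).div_const 6
      simpa using this
    have T5 : Tendsto (fun y : ℝ => (Real.pi ^ 2 / 6) * Real.log y) (𝓝[<] (1:ℝ)) (𝓝 0) := by
      have := Tlog.const_mul (Real.pi ^ 2 / 6)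
      simpa using this
    have Tmix : Tendsto (fun y : ℝ => Real.log y * Real.log (1 - y)) (𝓝[<] (1:ℝ)) (𝓝 0) := by
      have hσ : Tendsto (fun y : ℝ => 1 - y) (𝓝[<] (1:ℝ)) (𝓝[>] (0:ℝ)) := by
        rw [tendsto_nhdsWithin_iff]
        constructor
        · have hcont : Continuous (fun y : ℝ => 1 - y) := continuous_const.sub continuous_id
          have := hcont.tendsto (1:ℝ)
          simp only [sub_self] at this
          exact this.mono_left nhdsWithin_le_nhds
        · filter_upwards [self_mem_nhdsWithin] with y hy
          simp only [mem_Ioi]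
          have : y < 1 := hy
          linarith
      have h := tendsto_log_mul_log_one_sub.comp hσ
      have heq : (fun t : ℝ => Real.log t * Real.log (1 - t)) ∘ (fun y : ℝ => 1 - y)
          = fun y : ℝ => Real.log (1 - y) * Real.log y := by
        funext y
        simp only [Function.comp_apply]
        rw [show (1:ℝ) - (1 - y) = y by ring]
      rw [heq] at h
      exact h.congr fun y => mul_comm _ _
    have T6 : Tendsto (fun y : ℝ => (1/2) * Real.log y ^ 2 * Real.log (1 - y))
        (𝓝[<] (1:ℝ)) (𝓝 0) := by
      have h := (Tlog.const_mul (1/2:ℝ)).mul Tmix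
      have heq : (fun y : ℝ => (1/2 * Real.log y) * (Real.log y * Real.log (1 - y)))
          = fun y : ℝ => (1/2) * Real.log y ^ 2 * Real.log (1 - y) := by
        funext y; ring
      rw [heq] at h
      simpa using h
    have h := ((((T1.add T2).add T3).sub T4).sub T5).add T6
    rw [Li_zero, Li_three_one, ← hZ] at h
    simpa [hG] using h
  -- limit at (1/2)⁺
  have hlog2 : Real.log (1/2 : ℝ) = -Real.log 2 := by
    rw [one_div, Real.log_inv]
  have hcL : c = Li 3 (1/2) + Li 3 (1/2) + Li 3 (-1)
      - (-Real.log 2) ^ 3 / 6 - (Real.pi ^ 2 / 6) * (-Real.log 2)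
      + (1/2) * (-Real.log 2) ^ 2 * (-Real.log 2) := by
    have hmem : ∀ᶠ y in 𝓝[>] (1/2:ℝ), y ∈ Ioo (1/2:ℝ) 1 :=
      Ioo_mem_nhdsGT_of_mem (by norm_num : (1/2:ℝ) ∈ Ico (1/2:ℝ) 1)
    refine const_eq_rlimit (a := 1/2) (b := 1) (by norm_num) hconst' ?_
    have S1 : Tendsto (fun y => Li 3 y) (𝓝[>] (1/2:ℝ)) (𝓝 (Li 3 (1/2))) :=
      tendsto_Li_comp (by norm_num) (by norm_num)
        (tendsto_id.mono_left nhdsWithin_le_nhds)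
        (hmem.mono fun y hy => ⟨by linarith [hy.1], hy.2.le⟩)
    have S2 : Tendsto (fun y => Li 3 (1 - y)) (𝓝[>] (1/2:ℝ)) (𝓝 (Li 3 (1/2))) := by
      refine tendsto_Li_comp (by norm_num) (by norm_num) ?_ ?_
      · have hcont : Continuous (fun y : ℝ => 1 - y) := continuous_const.sub continuous_id
        have := hcont.tendsto (1/2:ℝ)
        rw [show (1:ℝ) - 1/2 = 1/2 by norm_num] at this
        exact this.mono_left nhdsWithin_le_nhds
      · exact hmem.mono fun y hy => ⟨by linarith [hy.2], by linarith [hy.1]⟩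
    have S3 : Tendsto (fun y => Li 3 (1 - 1/y)) (𝓝[>] (1/2:ℝ)) (𝓝 (Li 3 (-1))) := by
      refine tendsto_Li_comp (by norm_num) (by norm_num) ?_ ?_
      · have hcont : ContinuousAt (fun y : ℝ => 1 - 1/y) (1/2) :=
          continuousAt_const.sub (continuousAt_const.div continuousAt_id (by norm_num))
        have ht : Tendsto (fun y : ℝ => 1 - 1/y) (𝓝 (1/2)) (𝓝 (1 - 1/(1/2))) := hcont.tendsto
        rw [show (1:ℝ) - 1/(1/2) = -1 by norm_num] at ht
        exact ht.mono_left nhdsWithin_le_nhds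
      · exact hmem.mono fun y hy => ⟨(hmemIoo y hy).1.le, (hmemIoo y hy).2.le.trans (by norm_num)⟩
    have Slog : Tendsto (fun y : ℝ => Real.log y) (𝓝[>] (1/2:ℝ)) (𝓝 (-Real.log 2)) := by
      have := (Real.continuousAt_log (by norm_num : (1/2:ℝ) ≠ 0)).tendsto
      rw [hlog2] at this
      exact this.mono_left nhdsWithin_le_nhds
    have Slog1 : Tendsto (fun y : ℝ => Real.log (1 - y)) (𝓝[>] (1/2:ℝ)) (𝓝 (-Real.log 2)) := by
      have hcont : Continuous (fun y : ℝ => 1 - y) := continuous_const.sub continuous_id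
      have h2 := hcont.tendsto (1/2:ℝ)
      rw [show (1:ℝ) - 1/2 = 1/2 by norm_num] at h2
      have := (Real.continuousAt_log (by norm_num : (1/2:ℝ) ≠ 0)).tendsto.comp h2
      rw [hlog2] at this
      exact (this.mono_left nhdsWithin_le_nhds).congr fun y => by simp [Function.comp]
    have S4 := (Slog.pow 3).div_const 6
    have S5 := Slog.const_mul (Real.pi ^ 2 / 6)
    have S6 := ((Slog.pow 2).const_mul (1/2:ℝ)).mul Slog1
    have h := ((((S1.add S2).add S3).sub S4).sub S5).add S6
    exact h
  rw [hcZ] at hcL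
  have hneg := Li3_neg_one
  rw [Li_three_one, ← hZ] at hneg
  rw [hneg] at hcL
  nlinarith [hcL]
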